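/- There exists a real constant C such that lim_{σ→1⁺} (Σ_p p^{−σ} − log(1/(σ−1))) = C; that is, Σ_p p^{−σ} = log(1/(σ−1)) + C + o(1) as σ → 1⁺. -/

import Mathlib

noncomputable section

open Real Filter

lemma xp_pos (p : Nat.Primes) (σ : ℝ) : 0 < ((p : ℕ) : ℝ) ^ (-σ) :=
  Real.rpow_pos_of_pos (by exact_mod_cast p.prop.pos) _

lemma xp_le_half (p : Nat.Primes) {σ : ℝ} (hσ : 1 ≤ σ) :
    ((p : ℕ) : ℝ) ^ (-σ) ≤ 1 / 2 := by
  have h2 : (2 : ℝ) ≤ ((p : ℕ) : ℝ) := by exact_mod_cast p.prop.two_le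
  calc ((p : ℕ) : ℝ) ^ (-σ) ≤ ((p:ℕ):ℝ) ^ (-1 : ℝ) :=
        Real.rpow_le_rpow_of_exponent_le (by linarith) (by linarith)
    _ = ((p:ℕ):ℝ)⁻¹ := Real.rpow_neg_one _
    _ ≤ (2:ℝ)⁻¹ := by
        apply inv_anti₀ (by norm_num) h2
    _ = 1/2 := by norm_num

-- The "remainder" term h(x) = -log(1-x) - x and its bound
lemma h_bound {x : ℝ} (hx0 : 0 ≤ x) (hx : x ≤ 1/2) :
    |(-Real.log (1 - x) - x)| ≤ 2 * x ^ 2 := by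
  have h1 : |x| < 1 := by rw [abs_of_nonneg hx0]; linarith
  have := Real.abs_log_sub_add_sum_range_le h1 1
  norm_num at this
  have heq : |(-Real.log (1 - x) - x)| = |x + Real.log (1 - x)| := by
    rw [← abs_neg]; ring_nf
  rw [heq]
  calc |x + Real.log (1 - x)| ≤ x ^ 2 / (1 - |x|) := this
    _ ≤ x ^ 2 / (1/2) := by
        apply div_le_div_of_nonneg_left (sq_nonneg x) (by norm_num)
        rw [abs_of_nonneg hx0]; linarith
    _ = 2 * x ^ 2 := by ring

lemma xsq_le (p : Nat.Primes) {σ : ℝ} (hσ : 1 ≤ σ) :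
    (((p : ℕ) : ℝ) ^ (-σ)) ^ 2 ≤ ((p : ℕ) : ℝ) ^ (-2 : ℝ) := by
  have h1 : (1 : ℝ) ≤ ((p : ℕ) : ℝ) := by exact_mod_cast p.prop.one_lt.le
  rw [← Real.rpow_natCast (((p : ℕ) : ℝ) ^ (-σ)) 2, ← Real.rpow_mul (by linarith)]
  apply Real.rpow_le_rpow_of_exponent_le h1
  push_cast; nlinarith

-- Lemma A: real log of zeta
lemma zeta_re_eq_exp {σ : ℝ} (hσ : 1 < σ) :
    (riemannZeta σ).re =
      Real.exp (∑' p : Nat.Primes, -Real.log (1 - ((p : ℕ) : ℝ) ^ (-σ))) := by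
  have hz := riemannZeta_eulerProduct_exp_log (s := (σ : ℂ)) (by simpa using hσ)
  have hterm : ∀ p : Nat.Primes,
      -Complex.log (1 - (p : ℂ) ^ (-(σ:ℂ))) =
        ((-Real.log (1 - ((p : ℕ) : ℝ) ^ (-σ)) : ℝ) : ℂ) := by
    intro p
    have hx0 : (0:ℝ) ≤ ((p : ℕ) : ℝ) := by positivity
    have hcp : ((((p : ℕ) : ℝ) ^ (-σ) : ℝ) : ℂ) = (p : ℂ) ^ (-(σ:ℂ)) := by
      rw [Complex.ofReal_cpow hx0]
      push_cast
      ring_nf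
    have hpos : (0:ℝ) < 1 - ((p : ℕ) : ℝ) ^ (-σ) := by
      have := xp_le_half p hσ.le; linarith
    rw [← hcp, ← Complex.ofReal_one, ← Complex.ofReal_sub,
      ← Complex.ofReal_log hpos.le, ← Complex.ofReal_neg]
  rw [tsum_congr hterm, ← Complex.ofReal_tsum] at hz
  rw [← hz, ← Complex.ofReal_exp, Complex.ofReal_re]

-- Lemma B: residue of zeta at 1, real version
lemma realZeta_residue :
    Tendsto (fun σ : ℝ => (σ - 1) * (riemannZeta σ).re)
      (nhdsWithin 1 (Set.Ioi 1)) (nhds 1) := by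
  have h1 : Tendsto (fun σ : ℝ => (σ : ℂ)) (nhdsWithin 1 (Set.Ioi 1))
      (nhdsWithin 1 {(1:ℂ)}ᶜ) := by
    apply tendsto_nhdsWithin_of_tendsto_nhds_of_eventually_within
    · exact (Complex.continuous_ofReal.tendsto 1).mono_left nhdsWithin_le_nhds
    · filter_upwards [self_mem_nhdsWithin] with σ hσ
      simp only [Set.mem_compl_iff, Set.mem_singleton_iff]
      exact_mod_cast (ne_of_gt hσ)
  have h2 := riemannZeta_residue_one.comp h1
  have h3 := (Complex.continuous_re.tendsto 1).comp h2
  simp only [Complex.one_re] at h3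
  refine h3.congr fun σ => ?_
  simp only [Function.comp_apply]
  rw [show (σ:ℂ) - 1 = ((σ - 1 : ℝ) : ℂ) by push_cast; ring, Complex.re_ofReal_mul]

-- Lemma C: continuity of the remainder sum
lemma tendsto_g :
    Tendsto (fun σ : ℝ => ∑' p : Nat.Primes,
        (-Real.log (1 - ((p : ℕ) : ℝ) ^ (-σ)) - ((p : ℕ) : ℝ) ^ (-σ)))
      (nhdsWithin 1 (Set.Ioi 1))
      (nhds (∑' p : Nat.Primes,
        (-Real.log (1 - ((p : ℕ) : ℝ) ^ (-(1:ℝ))) - ((p : ℕ) : ℝ) ^ (-(1:ℝ))))) := by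
  apply tendsto_tsum_of_dominated_convergence
    (bound := fun p : Nat.Primes => 2 * ((p : ℕ) : ℝ) ^ (-2 : ℝ))
  · exact (Nat.Primes.summable_rpow.mpr (by norm_num)).mul_left 2
  · intro p
    have hp1 : (0:ℝ) < ((p : ℕ) : ℝ) := by exact_mod_cast p.prop.pos
    have hxc : Continuous fun σ : ℝ => ((p : ℕ) : ℝ) ^ (-σ) := by
      have : (fun σ : ℝ => ((p : ℕ) : ℝ) ^ (-σ)) =
          fun σ : ℝ => Real.exp (Real.log ((p : ℕ) : ℝ) * (-σ)) := by
        funext σ; rw [Real.rpow_def_of_pos hp1]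
      rw [this]; continuity
    have hca : ContinuousAt (fun σ : ℝ =>
        -Real.log (1 - ((p : ℕ) : ℝ) ^ (-σ)) - ((p : ℕ) : ℝ) ^ (-σ)) 1 := by
      have hne : 1 - ((p : ℕ) : ℝ) ^ (-(1:ℝ)) ≠ 0 := by
        have := xp_le_half p (le_refl 1); linarith
      have h1 : ContinuousAt (fun σ : ℝ => 1 - ((p : ℕ) : ℝ) ^ (-σ)) 1 :=
        (continuous_const.sub hxc).continuousAt
      exact ((h1.log hne).neg).sub hxc.continuousAt
    exact hca.tendsto.mono_left nhdsWithin_le_nhds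
  · filter_upwards [self_mem_nhdsWithin] with σ hσ
    intro p
    have hx0 := (xp_pos p σ).le
    have hxh := xp_le_half p (le_of_lt hσ)
    rw [Real.norm_eq_abs]
    calc |(-Real.log (1 - ((p : ℕ) : ℝ) ^ (-σ)) - ((p : ℕ) : ℝ) ^ (-σ))|
        ≤ 2 * (((p : ℕ) : ℝ) ^ (-σ)) ^ 2 := h_bound hx0 hxh
      _ ≤ 2 * ((p : ℕ) : ℝ) ^ (-2:ℝ) := by
          have := xsq_le p (le_of_lt hσ); linarith

theorem primeSum_log_asymptotic :
    ∃ C : ℝ, Filter.Tendsto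
      (fun σ : ℝ => (∑' p : Nat.Primes, ((p : ℕ) : ℝ) ^ (-σ)) - Real.log (1 / (σ - 1)))
      (nhdsWithin 1 (Set.Ioi 1)) (nhds C) := by
  set g : ℝ → ℝ := fun σ => ∑' p : Nat.Primes,
    (-Real.log (1 - ((p : ℕ) : ℝ) ^ (-σ)) - ((p : ℕ) : ℝ) ^ (-σ)) with hg
  refine ⟨-(g 1), ?_⟩
  have hlog : Tendsto (fun σ : ℝ => Real.log ((σ - 1) * (riemannZeta σ).re))
      (nhdsWithin 1 (Set.Ioi 1)) (nhds 0) := by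
    have := (Real.continuousAt_log one_ne_zero).tendsto.comp realZeta_residue
    simpa [Function.comp_def] using this
  have key := hlog.sub tendsto_g
  rw [zero_sub] at key
  refine key.congr' ?_
  filter_upwards [self_mem_nhdsWithin] with σ hσ
  have hσ1 : 1 < σ := hσ
  -- summability facts
  have hS1 : Summable (fun p : Nat.Primes => ((p : ℕ) : ℝ) ^ (-σ)) :=
    Nat.Primes.summable_rpow.mpr (by linarith)
  have hSh : Summable (fun p : Nat.Primes =>
      -Real.log (1 - ((p : ℕ) : ℝ) ^ (-σ)) - ((p : ℕ) : ℝ) ^ (-σ)) := by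
    apply Summable.of_norm_bounded (g := fun p : Nat.Primes => 2 * ((p : ℕ) : ℝ) ^ (-2:ℝ))
      ((Nat.Primes.summable_rpow.mpr (by norm_num)).mul_left 2)
    intro p
    rw [Real.norm_eq_abs]
    calc |(-Real.log (1 - ((p : ℕ) : ℝ) ^ (-σ)) - ((p : ℕ) : ℝ) ^ (-σ))|
        ≤ 2 * (((p : ℕ) : ℝ) ^ (-σ)) ^ 2 :=
          h_bound (xp_pos p σ).le (xp_le_half p hσ1.le)
      _ ≤ 2 * ((p : ℕ) : ℝ) ^ (-2:ℝ) := by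
          have := xsq_le p hσ1.le; linarith
  have hSlog : Summable (fun p : Nat.Primes => -Real.log (1 - ((p : ℕ) : ℝ) ^ (-σ))) := by
    have := hSh.add hS1
    refine this.congr fun p => ?_
    ring
  -- value of log zeta
  have hzre : Real.log ((riemannZeta σ).re)
      = ∑' p : Nat.Primes, -Real.log (1 - ((p : ℕ) : ℝ) ^ (-σ)) := by
    rw [zeta_re_eq_exp hσ1, Real.log_exp]
  have hzpos : (0:ℝ) < (riemannZeta σ).re := by
    rw [zeta_re_eq_exp hσ1]; exact Real.exp_pos _
  have hσ0 : σ - 1 ≠ 0 := by linarith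
  rw [Real.log_mul hσ0 (ne_of_gt hzpos), hzre, hSlog.tsum_sub hS1, one_div, Real.log_inv]
  ring
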